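/- Let a,b ∈ 𝔹²∖{0} with a·conj(b) ∉ ℝ (a, b and 0 not collinear). Let c ∈ ℂ satisfy |c − a| = |c + 1/conj(a)| = |c − 1/conj(b)| (so c is the center of the stereographic projection of the great circle through a and b/|b|² = 1/conj(b)), let u ∈ ℂ satisfy |u| = 1 and |u − c| = |a − c|, and let v ∈ ℂ satisfy |v − a| = |v − b| = |v − 1/conj(a)| (so v is the center of the circle through a, b and a/|a|² = 1/conj(a), which is orthogonal to the unit circle). Then the hyperbolic midpoint m of a and b lies on the closed Euclidean segment from −u to u and satisfies |m − v| = |a − v|. -/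

import Mathlib

open ComplexConjugate

/-- The hyperbolic metric of the unit disk. -/
noncomputable def rho (x y : ℂ) : ℝ :=
  2 * Real.arsinh (‖x - y‖ /
    Real.sqrt ((1 - ‖x‖ ^ 2) * (1 - ‖y‖ ^ 2)))

set_option maxHeartbeats 2000000 in
theorem stmt12 (a b : ℂ) (ha : ‖a‖ < 1) (hb : ‖b‖ < 1)
    (ha0 : a ≠ 0) (hb0 : b ≠ 0)
    (hnc : a * conj b ∉ Set.range (Complex.ofReal))
    (c : ℂ)
    (hc1 : ‖c - a‖ = ‖c + 1 / conj a‖)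
    (hc2 : ‖c - a‖ = ‖c - 1 / conj b‖)
    (u : ℂ) (hu1 : ‖u‖ = 1) (hu2 : ‖u - c‖ = ‖a - c‖)
    (v : ℂ)
    (hv1 : ‖v - a‖ = ‖v - b‖)
    (hv2 : ‖v - a‖ = ‖v - 1 / conj a‖)
    (m : ℂ) (hm : ‖m‖ < 1)
    (hm1 : rho a m = rho a b / 2) (hm2 : rho m b = rho a b / 2) :
    m ∈ segment ℝ (-u) u ∧ ‖m - v‖ = ‖a - v‖ := by
  have nsq_of_abs : ∀ {x y : ℂ}, ‖x‖ = ‖y‖ →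
      Complex.normSq x = Complex.normSq y := by
    intro x y h
    rw [← Complex.sq_norm, ← Complex.sq_norm, h]
  have hca' : (conj a : ℂ) ≠ 0 := by simpa using ha0
  have hcb' : (conj b : ℂ) ≠ 0 := by simpa using hb0
  have hA1 : a.re * a.re + a.im * a.im < 1 := by
    have := Complex.sq_norm a
    rw [Complex.normSq_apply] at this
    nlinarith [norm_nonneg a]
  have hB1 : b.re * b.re + b.im * b.im < 1 := by
    have := Complex.sq_norm b
    rw [Complex.normSq_apply] at this
    nlinarith [norm_nonneg b]
  have hM1 : m.re * m.re + m.im * m.im < 1 := by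
    have := Complex.sq_norm m
    rw [Complex.normSq_apply] at this
    nlinarith [norm_nonneg m]
  -- linear relations for c, u, v
  have hca : c.re * a.re + c.im * a.im = ((a.re * a.re + a.im * a.im) - 1) / 2 := by
    have e1 : (c + 1 / conj a) * conj a = c * conj a + 1 := by
      rw [add_mul, one_div, inv_mul_cancel₀ hca']
    have e2 : (c - a) * conj a = c * conj a - ((Complex.normSq a : ℝ) : ℂ) := by
      rw [sub_mul, Complex.mul_conj]
    have h4 : Complex.normSq (c * conj a - ((Complex.normSq a : ℝ) : ℂ)) =
        Complex.normSq (c * conj a + 1) := by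
      rw [← e1, ← e2]
      exact nsq_of_abs (by rw [norm_mul, norm_mul, hc1])
    simp only [Complex.normSq_apply, Complex.sub_re, Complex.sub_im, Complex.add_re,
      Complex.add_im, Complex.mul_re, Complex.mul_im, Complex.ofReal_re, Complex.ofReal_im,
      Complex.conj_re, Complex.conj_im, Complex.one_re, Complex.one_im] at h4
    have hfac : (2 * (a.re * a.re + a.im * a.im) + 2) *
        ((c.re * a.re + c.im * a.im) - ((a.re * a.re + a.im * a.im) - 1) / 2) = 0 := by
      linear_combination -h4
    have h2N : (0:ℝ) < 2 * (a.re * a.re + a.im * a.im) + 2 := by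
      nlinarith [sq_nonneg a.re, sq_nonneg a.im]
    rcases mul_eq_zero.1 hfac with h | h
    · linarith
    · linarith
  have hcb : c.re * b.re + c.im * b.im = (1 - (b.re * b.re + b.im * b.im)) / 2 := by
    have e1 : (c - 1 / conj b) * conj b = c * conj b - 1 := by
      rw [sub_mul, one_div, inv_mul_cancel₀ hcb']
    have h4 : Complex.normSq ((c - a) * conj b) = Complex.normSq (c * conj b - 1) := by
      rw [← e1]
      exact nsq_of_abs (by rw [norm_mul, norm_mul, hc2])
    simp only [Complex.normSq_apply, Complex.sub_re, Complex.sub_im, Complex.add_re,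
      Complex.add_im, Complex.mul_re, Complex.mul_im, Complex.ofReal_re, Complex.ofReal_im,
      Complex.conj_re, Complex.conj_im, Complex.one_re, Complex.one_im] at h4
    linear_combination h4 / 2 + (b.re * b.re + b.im * b.im) * hca
  have hnsu : u.re * u.re + u.im * u.im = 1 := by
    have := congrArg (· ^ 2) hu1
    simp only [Complex.sq_norm, Complex.normSq_apply, one_pow] at this
    exact this
  have hcu : c.re * u.re + c.im * u.im = 0 := by
    have h4 := nsq_of_abs hu2
    simp only [Complex.normSq_apply, Complex.sub_re, Complex.sub_im] at h4
    linear_combination (-1/2) * h4 + (1/2) * hnsu + hca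
  have hva : v.re * a.re + v.im * a.im = (1 + (a.re * a.re + a.im * a.im)) / 2 := by
    have e1 : (v - 1 / conj a) * conj a = v * conj a - 1 := by
      rw [sub_mul, one_div, inv_mul_cancel₀ hca']
    have e2 : (v - a) * conj a = v * conj a - ((Complex.normSq a : ℝ) : ℂ) := by
      rw [sub_mul, Complex.mul_conj]
    have h4 : Complex.normSq (v * conj a - ((Complex.normSq a : ℝ) : ℂ)) =
        Complex.normSq (v * conj a - 1) := by
      rw [← e1, ← e2]
      exact nsq_of_abs (by rw [norm_mul, norm_mul, hv2])
    simp only [Complex.normSq_apply, Complex.sub_re, Complex.sub_im, Complex.add_re,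
      Complex.add_im, Complex.mul_re, Complex.mul_im, Complex.ofReal_re, Complex.ofReal_im,
      Complex.conj_re, Complex.conj_im, Complex.one_re, Complex.one_im] at h4
    have hfac : (2 - 2 * (a.re * a.re + a.im * a.im)) *
        ((v.re * a.re + v.im * a.im) - (1 + (a.re * a.re + a.im * a.im)) / 2) = 0 := by
      linear_combination h4
    rcases mul_eq_zero.1 hfac with h | h
    · linarith
    · linarith
  have hvb : v.re * b.re + v.im * b.im = (1 + (b.re * b.re + b.im * b.im)) / 2 := by
    have h4 := nsq_of_abs hv1
    simp only [Complex.normSq_apply, Complex.sub_re, Complex.sub_im] at h4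
    linear_combination hva + h4 / 2
  -- metric part
  have hα : (0:ℝ) < 1 - ‖a‖ ^ 2 := by nlinarith [norm_nonneg a]
  have hβ : (0:ℝ) < 1 - ‖b‖ ^ 2 := by nlinarith [norm_nonneg b]
  have hμ : (0:ℝ) < 1 - ‖m‖ ^ 2 := by nlinarith [norm_nonneg m]
  set X := ‖a - m‖ / Real.sqrt ((1 - ‖a‖ ^ 2) * (1 - ‖m‖ ^ 2)) with hXdef
  set Y := ‖m - b‖ / Real.sqrt ((1 - ‖m‖ ^ 2) * (1 - ‖b‖ ^ 2)) with hYdef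
  set T := ‖a - b‖ / Real.sqrt ((1 - ‖a‖ ^ 2) * (1 - ‖b‖ ^ 2)) with hTdef
  have hm1' : 2 * Real.arsinh X = 2 * Real.arsinh T / 2 := hm1
  have hm2' : 2 * Real.arsinh Y = 2 * Real.arsinh T / 2 := hm2
  have hXT : T = 2 * X * Real.sqrt (1 + X ^ 2) := by
    have h1 : Real.arsinh T = 2 * Real.arsinh X := by linarith
    calc T = Real.sinh (Real.arsinh T) := (Real.sinh_arsinh T).symm
      _ = Real.sinh (2 * Real.arsinh X) := by rw [h1]
      _ = 2 * X * Real.sqrt (1 + X ^ 2) := by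
          rw [Real.sinh_two_mul, Real.sinh_arsinh, Real.cosh_arsinh]
  have hYT : T = 2 * Y * Real.sqrt (1 + Y ^ 2) := by
    have h1 : Real.arsinh T = 2 * Real.arsinh Y := by linarith
    calc T = Real.sinh (Real.arsinh T) := (Real.sinh_arsinh T).symm
      _ = Real.sinh (2 * Real.arsinh Y) := by rw [h1]
      _ = 2 * Y * Real.sqrt (1 + Y ^ 2) := by
          rw [Real.sinh_two_mul, Real.sinh_arsinh, Real.cosh_arsinh]
  have hT2X : T ^ 2 = 4 * X ^ 2 * (1 + X ^ 2) := by
    rw [hXT, mul_pow, mul_pow, Real.sq_sqrt (by positivity)]; ring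
  have hT2Y : T ^ 2 = 4 * Y ^ 2 * (1 + Y ^ 2) := by
    rw [hYT, mul_pow, mul_pow, Real.sq_sqrt (by positivity)]; ring
  have hXY : Y ^ 2 = X ^ 2 := by
    have h5 : (X ^ 2 - Y ^ 2) * (1 + X ^ 2 + Y ^ 2) = 0 := by
      linear_combination (hT2X.symm.trans hT2Y) / 4
    have h6 : (0:ℝ) < 1 + X ^ 2 + Y ^ 2 := by positivity
    rcases mul_eq_zero.1 h5 with h | h
    · linarith
    · linarith
  have he1 : X ^ 2 * ((1 - Complex.normSq a) * (1 - Complex.normSq m)) =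
      Complex.normSq (a - m) := by
    rw [hXdef, div_pow, Real.sq_sqrt (by positivity)]
    simp only [Complex.sq_norm]
    exact div_mul_cancel₀ _ (by rw [← Complex.sq_norm a, ← Complex.sq_norm m]; exact ne_of_gt (mul_pos hα hμ))
  have he2 : X ^ 2 * ((1 - Complex.normSq m) * (1 - Complex.normSq b)) =
      Complex.normSq (m - b) := by
    rw [← hXY, hYdef, div_pow, Real.sq_sqrt (by positivity)]
    simp only [Complex.sq_norm]
    exact div_mul_cancel₀ _ (by rw [← Complex.sq_norm m, ← Complex.sq_norm b]; exact ne_of_gt (mul_pos hμ hβ))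
  have he3 : 4 * X ^ 2 * (1 + X ^ 2) * ((1 - Complex.normSq a) * (1 - Complex.normSq b)) =
      Complex.normSq (a - b) := by
    rw [← hT2X, hTdef, div_pow, Real.sq_sqrt (by positivity)]
    simp only [Complex.sq_norm]
    exact div_mul_cancel₀ _ (by rw [← Complex.sq_norm a, ← Complex.sq_norm b]; exact ne_of_gt (mul_pos hα hβ))
  -- the key identity  S * m = (1-|b|²) a + (1-|a|²) b
  have h0 : Complex.normSq
      (((((1 - Complex.normSq a) + (1 - Complex.normSq b)
          + 2 * X ^ 2 * ((1 - Complex.normSq a) * (1 - Complex.normSq b))) : ℝ) : ℂ) * m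
        - ((((1 - Complex.normSq b) : ℝ) : ℂ) * a + (((1 - Complex.normSq a) : ℝ) : ℂ) * b)) = 0 := by
    simp only [Complex.normSq_apply, Complex.sub_re, Complex.sub_im, Complex.add_re,
      Complex.add_im, Complex.mul_re, Complex.mul_im, Complex.ofReal_re, Complex.ofReal_im]
      at he1 he2 he3 ⊢
    linear_combination
      (-(((1 - (a.re*a.re + a.im*a.im)) + (1 - (b.re*b.re + b.im*b.im))
          + 2 * X ^ 2 * ((1 - (a.re*a.re + a.im*a.im)) * (1 - (b.re*b.re + b.im*b.im))))
        * (1 - (b.re*b.re + b.im*b.im)))) * he1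
      + (-(((1 - (a.re*a.re + a.im*a.im)) + (1 - (b.re*b.re + b.im*b.im))
          + 2 * X ^ 2 * ((1 - (a.re*a.re + a.im*a.im)) * (1 - (b.re*b.re + b.im*b.im))))
        * (1 - (a.re*a.re + a.im*a.im)))) * he2
      + ((1 - (a.re*a.re + a.im*a.im)) * (1 - (b.re*b.re + b.im*b.im))) * he3
  have hm0 : ((((1 - Complex.normSq a) + (1 - Complex.normSq b)
      + 2 * X ^ 2 * ((1 - Complex.normSq a) * (1 - Complex.normSq b))) : ℝ) : ℂ) * m
      = (((1 - Complex.normSq b : ℝ)) : ℂ) * a + (((1 - Complex.normSq a : ℝ)) : ℂ) * b :=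
    sub_eq_zero.1 (Complex.normSq_eq_zero.1 h0)
  have hre : ((1 - (a.re*a.re + a.im*a.im)) + (1 - (b.re*b.re + b.im*b.im))
      + 2 * X ^ 2 * ((1 - (a.re*a.re + a.im*a.im)) * (1 - (b.re*b.re + b.im*b.im)))) * m.re
      = (1 - (b.re*b.re + b.im*b.im)) * a.re + (1 - (a.re*a.re + a.im*a.im)) * b.re := by
    have h := congrArg Complex.re hm0
    simp only [Complex.mul_re, Complex.add_re, Complex.ofReal_re, Complex.ofReal_im,
      Complex.normSq_apply, zero_mul, sub_zero] at h
    linear_combination h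
  have him : ((1 - (a.re*a.re + a.im*a.im)) + (1 - (b.re*b.re + b.im*b.im))
      + 2 * X ^ 2 * ((1 - (a.re*a.re + a.im*a.im)) * (1 - (b.re*b.re + b.im*b.im)))) * m.im
      = (1 - (b.re*b.re + b.im*b.im)) * a.im + (1 - (a.re*a.re + a.im*a.im)) * b.im := by
    have h := congrArg Complex.im hm0
    simp only [Complex.mul_im, Complex.add_im, Complex.ofReal_re, Complex.ofReal_im,
      Complex.normSq_apply, zero_mul, add_zero] at h
    linear_combination h
  have hAL : (0:ℝ) < 1 - (a.re*a.re + a.im*a.im) := by linarith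
  have hBE : (0:ℝ) < 1 - (b.re*b.re + b.im*b.im) := by linarith
  have hSpos : (0:ℝ) < (1 - (a.re*a.re + a.im*a.im)) + (1 - (b.re*b.re + b.im*b.im))
      + 2 * X ^ 2 * ((1 - (a.re*a.re + a.im*a.im)) * (1 - (b.re*b.re + b.im*b.im))) := by
    have h2 : (0:ℝ) ≤ 2 * X ^ 2 * ((1 - (a.re*a.re + a.im*a.im)) * (1 - (b.re*b.re + b.im*b.im))) :=
      mul_nonneg (mul_nonneg (by norm_num) (sq_nonneg X)) (le_of_lt (mul_pos hAL hBE))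
    linarith
  -- goal 1
  have hcm : c.re * m.re + c.im * m.im = 0 := by
    have h : ((1 - (a.re*a.re + a.im*a.im)) + (1 - (b.re*b.re + b.im*b.im))
        + 2 * X ^ 2 * ((1 - (a.re*a.re + a.im*a.im)) * (1 - (b.re*b.re + b.im*b.im))))
        * (c.re * m.re + c.im * m.im) = 0 := by
      linear_combination c.re * hre + c.im * him
        + (1 - (b.re*b.re + b.im*b.im)) * hca + (1 - (a.re*a.re + a.im*a.im)) * hcb
    exact (mul_eq_zero.1 h).resolve_left hSpos.ne'
  have hdet : m.re * u.im - m.im * u.re = 0 := by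
    by_cases hcre : c.re = 0
    · have hcim : c.im ≠ 0 := by
        intro h
        rw [hcre, h] at hca
        simp at hca
        linarith
      have h : c.im * (m.re * u.im - m.im * u.re) = 0 := by
        linear_combination (-u.re) * hcm + m.re * hcu
      exact (mul_eq_zero.1 h).resolve_left hcim
    · have h : c.re * (m.re * u.im - m.im * u.re) = 0 := by
        linear_combination u.im * hcm + (-m.im) * hcu
      exact (mul_eq_zero.1 h).resolve_left hcre
  have hmu : m = ((m.re * u.re + m.im * u.im : ℝ) : ℂ) * u := by
    apply Complex.ext
    · simp only [Complex.mul_re, Complex.ofReal_re, Complex.ofReal_im, zero_mul, sub_zero]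
      linear_combination u.im * hdet - m.re * hnsu
    · simp only [Complex.mul_im, Complex.ofReal_re, Complex.ofReal_im, zero_mul, add_zero]
      linear_combination (-u.re) * hdet - m.im * hnsu
  have habs : |m.re * u.re + m.im * u.im| < 1 := by
    have h := hm
    rw [hmu, norm_mul, Complex.norm_real, Real.norm_eq_abs, hu1, mul_one] at h
    exact h
  have ht' := abs_lt.1 habs
  constructor
  · refine ⟨(1 - (m.re * u.re + m.im * u.im)) / 2, (1 + (m.re * u.re + m.im * u.im)) / 2,
      by linarith, by linarith, by ring, ?_⟩
    rw [Complex.real_smul, Complex.real_smul]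
    have hmu' : m = (↑m.re * ↑u.re + ↑m.im * ↑u.im : ℂ) * u := by push_cast at hmu ⊢; exact hmu
    push_cast
    linear_combination -hmu'
  · -- goal 2
    have key : ((1 - (a.re*a.re + a.im*a.im)) + (1 - (b.re*b.re + b.im*b.im))
        + 2 * X ^ 2 * ((1 - (a.re*a.re + a.im*a.im)) * (1 - (b.re*b.re + b.im*b.im)))) ^ 2
        * Complex.normSq (m - v)
        = ((1 - (a.re*a.re + a.im*a.im)) + (1 - (b.re*b.re + b.im*b.im))
        + 2 * X ^ 2 * ((1 - (a.re*a.re + a.im*a.im)) * (1 - (b.re*b.re + b.im*b.im)))) ^ 2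
        * Complex.normSq (a - v) := by
      simp only [Complex.normSq_apply, Complex.sub_re, Complex.sub_im, Complex.add_re,
        Complex.add_im, Complex.mul_re, Complex.mul_im, Complex.ofReal_re, Complex.ofReal_im]
        at he3 ⊢
      linear_combination
        (((1 - (a.re*a.re + a.im*a.im)) + (1 - (b.re*b.re + b.im*b.im))
          + 2 * X ^ 2 * ((1 - (a.re*a.re + a.im*a.im)) * (1 - (b.re*b.re + b.im*b.im)))) * m.re
          + (1 - (b.re*b.re + b.im*b.im)) * a.re + (1 - (a.re*a.re + a.im*a.im)) * b.re
          - 2 * ((1 - (a.re*a.re + a.im*a.im)) + (1 - (b.re*b.re + b.im*b.im))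
          + 2 * X ^ 2 * ((1 - (a.re*a.re + a.im*a.im)) * (1 - (b.re*b.re + b.im*b.im)))) * v.re) * hre
        + (((1 - (a.re*a.re + a.im*a.im)) + (1 - (b.re*b.re + b.im*b.im))
          + 2 * X ^ 2 * ((1 - (a.re*a.re + a.im*a.im)) * (1 - (b.re*b.re + b.im*b.im)))) * m.im
          + (1 - (b.re*b.re + b.im*b.im)) * a.im + (1 - (a.re*a.re + a.im*a.im)) * b.im
          - 2 * ((1 - (a.re*a.re + a.im*a.im)) + (1 - (b.re*b.re + b.im*b.im))
          + 2 * X ^ 2 * ((1 - (a.re*a.re + a.im*a.im)) * (1 - (b.re*b.re + b.im*b.im)))) * v.im) * him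
        + (2 * ((1 - (a.re*a.re + a.im*a.im)) + (1 - (b.re*b.re + b.im*b.im))
          + 2 * X ^ 2 * ((1 - (a.re*a.re + a.im*a.im)) * (1 - (b.re*b.re + b.im*b.im))))
          * (((1 - (a.re*a.re + a.im*a.im)) + (1 - (b.re*b.re + b.im*b.im))
          + 2 * X ^ 2 * ((1 - (a.re*a.re + a.im*a.im)) * (1 - (b.re*b.re + b.im*b.im))))
            - (1 - (b.re*b.re + b.im*b.im)))) * hva
        + (-2 * ((1 - (a.re*a.re + a.im*a.im)) + (1 - (b.re*b.re + b.im*b.im))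
          + 2 * X ^ 2 * ((1 - (a.re*a.re + a.im*a.im)) * (1 - (b.re*b.re + b.im*b.im))))
          * (1 - (a.re*a.re + a.im*a.im))) * hvb
        + ((1 - (a.re*a.re + a.im*a.im)) * (1 - (b.re*b.re + b.im*b.im))) * he3
    have hnsq : Complex.normSq (m - v) = Complex.normSq (a - v) :=
      mul_left_cancel₀ (pow_ne_zero 2 hSpos.ne') key
    rw [Complex.norm_def, Complex.norm_def, hnsq]
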